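/- Γ is uniform if and only if, for every b ∈ Γ with rk(b) ≥ 3, the comparability graph of Γ_{b,3} (vertex set Γ_{b,3}, with an edge between distinct a, a′ whenever a < a′ or a′ < a) is connected. -/

import Mathlib

/-- A finite ranked poset: a partial order with a unique minimal element `star`
and a rank function `rk` such that `rk star = 0`, covering relations increase the
rank by exactly one, and `rk` is strictly monotone (for a finite poset this is
equivalent to: all maximal chains in `[star, x]` have the same length `rk x`). -/
structure RankedPoset (Γ : Type) [PartialOrder Γ] where
  star : Γ
  rk : Γ → ℕ
  bot_le : ∀ x, star ≤ x
  rk_star : rk star = 0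
  rk_covBy : ∀ ⦃x y : Γ⦄, x ⋖ y → rk y = rk x + 1
  rk_strictMono : StrictMono rk


/-- Membership in `Γ_{b,q} = {a | * < a < b and d(b,a) ≤ q - 1}`. -/
def memGbq {Γ : Type} [PartialOrder Γ] (R : RankedPoset Γ) (b : Γ) (q : ℕ) (a : Γ) : Prop :=
  R.star < a ∧ a < b ∧ R.rk b - R.rk a ≤ q - 1

/-- The comparability graph of a subset `S` of the poset `Γ`: vertices are the elements
of `S`, with an edge between distinct `a, a'` whenever `a < a'` or `a' < a`. -/
def compGraph {Γ : Type} [PartialOrder Γ] (S : Γ → Prop) : SimpleGraph {a : Γ // S a} where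
  Adj u v := u ≠ v ∧ (u.1 < v.1 ∨ v.1 < u.1)
  symm := ⟨fun u v h => ⟨h.1.symm, h.2.symm⟩⟩
  loopless := ⟨fun u h => h.1 rfl⟩

/-- `a ∈ S_x(1)`: `a < x` and `d(x,a) = 1`. -/
def memS1 {Γ : Type} [PartialOrder Γ] (R : RankedPoset Γ) (x a : Γ) : Prop :=
  a < x ∧ R.rk x - R.rk a = 1

/-- `Γ` is uniform if for every `x ∈ Γ₊` the equivalence relation on `S_x(1)` generated
by `a ∼_x b ↔ ∃ c ∈ S_a(1) ∩ S_b(1)` has exactly one equivalence class. -/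
def RankedPoset.Uniform {Γ : Type} [PartialOrder Γ] (R : RankedPoset Γ) : Prop :=
  ∀ x : Γ, x ≠ R.star →
    (∃ a, memS1 R x a) ∧
      ∀ a b : Γ, memS1 R x a → memS1 R x b →
        Relation.EqvGen
          (fun u v => memS1 R x u ∧ memS1 R x v ∧ ∃ c, memS1 R u c ∧ memS1 R v c) a b

section Aux
variable {Γ : Type} [PartialOrder Γ] [Fintype Γ] (R : RankedPoset Γ)

lemma RP_exists_covby_le {c x : Γ} (h : c < x) :
    ∃ a, memS1 R a c ∧ a ≤ x := by
  classical
  obtain ⟨m, hm, hmin⟩ : ∃ m ∈ Finset.univ.filter (fun z => c < z ∧ z ≤ x),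
      ∀ y ∈ Finset.univ.filter (fun z => c < z ∧ z ≤ x), ¬ y < m := by
    obtain ⟨m, hm1, hm2⟩ := Finset.exists_minimal
      (s := Finset.univ.filter fun z => c < z ∧ z ≤ x) ⟨x, by simp [h]⟩
    exact ⟨m, hm1, fun y hy hlt => lt_irrefl _ (hlt.trans_le (hm2 hy hlt.le))⟩
  simp only [Finset.mem_filter, Finset.mem_univ, true_and] at hm hmin
  refine ⟨m, ⟨hm.1, ?_⟩, hm.2⟩
  have hcov : c ⋖ m := ⟨hm.1, fun w hw1 hw2 => hmin w ⟨hw1, hw2.le.trans hm.2⟩ hw2⟩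
  rw [R.rk_covBy hcov]; omega

lemma RP_exists_memS1 {x : Γ} (h : R.star < x) : ∃ a, memS1 R x a := by
  classical
  obtain ⟨m, hm, hmax⟩ : ∃ m ∈ Finset.univ.filter (fun z => z < x),
      ∀ y ∈ Finset.univ.filter (fun z => z < x), ¬ m < y := by
    obtain ⟨m, hm1, hm2⟩ := Finset.exists_maximal
      (s := Finset.univ.filter fun z => z < x) ⟨R.star, by simp [h]⟩
    exact ⟨m, hm1, fun y hy hlt => lt_irrefl _ (hlt.trans_le (hm2 hy hlt.le))⟩
  simp only [Finset.mem_filter, Finset.mem_univ, true_and] at hm hmax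
  have hcov : m ⋖ x := ⟨hm, fun w hw1 hw2 => hmax w hw2 hw1⟩
  exact ⟨m, hm, by rw [R.rk_covBy hcov]; omega⟩

lemma RP_star_lt {x : Γ} (h : R.rk x ≠ 0) : R.star < x :=
  lt_of_le_of_ne (R.bot_le x) (by rintro rfl; exact h R.rk_star)
end Aux

lemma eqvGen_to_rtg {α} {r : α → α → Prop} (hs : Symmetric r) {a b}
    (h : Relation.EqvGen r a b) : Relation.ReflTransGen r a b := by
  induction h with
  | rel _ _ h => exact .single h
  | refl => exact .refl
  | symm a b _ ih => haveI : Std.Symm r := ⟨fun _ _ h => hs h⟩; exact Std.Symm.symm _ _ ih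
  | trans _ _ _ _ _ ih1 ih2 => exact ih1.trans ih2

/-- `Γ` is uniform if and only if, for every `b ∈ Γ` with `rk b ≥ 3`, the comparability
graph of `Γ_{b,3}` is connected. -/
theorem uniform_iff_compGraph_connected
    {Γ : Type} [PartialOrder Γ] [Fintype Γ] (R : RankedPoset Γ) :
    R.Uniform ↔ ∀ b : Γ, 3 ≤ R.rk b → (compGraph (memGbq R b 3)).Connected := by
  constructor
  · -- Uniform → connected
    intro hu b hb
    have hbs : b ≠ R.star := by
      intro e; rw [e, R.rk_star] at hb; omega
    obtain ⟨⟨a0, ha0⟩, hrel⟩ := hu b hbs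
    -- vertex proof from memS1
    have vert : ∀ {a : Γ}, memS1 R b a → memGbq R b 3 a := by
      intro a ha
      have h1 : R.rk a < R.rk b := R.rk_strictMono ha.1
      have h2 := ha.2
      exact ⟨RP_star_lt R (by omega), ha.1, by omega⟩
    -- every vertex is reachable from a "top" (memS1) vertex
    have toTop : ∀ u : {a : Γ // memGbq R b 3 a},
        ∃ (a : Γ) (ha : memS1 R b a), (compGraph (memGbq R b 3)).Reachable u ⟨a, vert ha⟩ := by
      intro u
      by_cases hs : memS1 R b u.1
      · exact ⟨u.1, hs, by rw [show (⟨u.1, vert hs⟩ : {a : Γ // memGbq R b 3 a}) = u from rfl]⟩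
      · obtain ⟨hsu, hub, hd⟩ := u.2
        have hru : R.rk u.1 < R.rk b := R.rk_strictMono hub
        obtain ⟨a, haS, hab⟩ := RP_exists_covby_le R hub
        have hua : u.1 < a := haS.1
        have hra : R.rk u.1 < R.rk a := R.rk_strictMono hua
        have hne : a ≠ b := by
          rintro rfl
          exact hs ⟨hub, haS.2⟩
        have haS' : memS1 R b a := by
          refine ⟨lt_of_le_of_ne hab hne, ?_⟩
          have : R.rk b - R.rk u.1 ≠ 1 := fun h => hs ⟨hub, h⟩
          have hab' : R.rk a < R.rk b := R.rk_strictMono (lt_of_le_of_ne hab hne)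
          omega
        refine ⟨a, haS', SimpleGraph.Adj.reachable ?_⟩
        exact show _ ∧ _ from ⟨by
          intro e
          have : u.1 = a := congrArg Subtype.val e
          exact absurd this (ne_of_lt hua), Or.inl hua⟩
    rw [SimpleGraph.connected_iff]
    refine ⟨?_, ⟨⟨a0, vert ha0⟩⟩⟩
    · -- preconnected
      intro u v
      obtain ⟨au, hau, hru⟩ := toTop u
      obtain ⟨av, hav, hrv⟩ := toTop v
      refine hru.trans (SimpleGraph.Reachable.trans ?_ hrv.symm)
      -- reachability between two top vertices from EqvGen
      have heq := hrel au av hau hav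
      have hsym : Symmetric (fun u v => memS1 R b u ∧ memS1 R b v ∧
          ∃ c, memS1 R u c ∧ memS1 R v c) :=
        fun x y ⟨h1, h2, c, hc1, hc2⟩ => ⟨h2, h1, c, hc2, hc1⟩
      have hrtg := eqvGen_to_rtg hsym heq
      clear heq hru hrv
      induction hrtg with
      | refl => rfl
      | @tail c a' _ hstep ih =>
        obtain ⟨hc, ha', d, hd1, hd2⟩ := hstep
        have hc2 := hc.2
        have ha'2 := ha'.2
        have hd12 := hd1.2
        have hd22 := hd2.2
        refine (ih hc).trans ?_
        -- c — d — a'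
        have hrc : R.rk c < R.rk b := R.rk_strictMono hc.1
        have hrd : R.rk d < R.rk c := R.rk_strictMono hd1.1
        have hdv : memGbq R b 3 d := by
          refine ⟨RP_star_lt R (by omega), hd1.1.trans hc.1, by omega⟩
        have e1 : (compGraph (memGbq R b 3)).Adj ⟨c, vert hc⟩ ⟨d, hdv⟩ := by
          exact show _ ∧ _ from ⟨by
            intro e
            exact absurd (congrArg Subtype.val e) (ne_of_gt hd1.1), Or.inr hd1.1⟩
        have e2 : (compGraph (memGbq R b 3)).Adj ⟨d, hdv⟩ ⟨a', vert ha'⟩ := by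
          exact show _ ∧ _ from ⟨by
            intro e
            exact absurd (congrArg Subtype.val e) (ne_of_lt hd2.1), Or.inl hd2.1⟩
        exact e1.reachable.trans e2.reachable
  · -- connected → Uniform
    intro h x hx
    have hsx : R.star < x := lt_of_le_of_ne (R.bot_le x) (Ne.symm hx)
    obtain ⟨a0, ha0⟩ := RP_exists_memS1 R hsx
    refine ⟨⟨a0, ha0⟩, ?_⟩
    intro a b ha hb
    have ha2 := ha.2
    have hb2 := hb.2
    set rel := fun u v => memS1 R x u ∧ memS1 R x v ∧ ∃ c, memS1 R u c ∧ memS1 R v c with hreldef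
    have hra : R.rk a < R.rk x := R.rk_strictMono ha.1
    have hrb : R.rk b < R.rk x := R.rk_strictMono hb.1
    rcases lt_or_ge (R.rk x) 3 with h3 | h3
    · rcases lt_or_ge (R.rk x) 2 with h2 | h2
      · -- rk x = 1 : a = star = b
        have hrx : R.rk x = 1 := by omega
        have hras : R.rk a = 0 := by omega
        have hrbs : R.rk b = 0 := by omega
        have ea : a = R.star := by
          by_contra hne
          have := R.rk_strictMono (lt_of_le_of_ne (R.bot_le a) (Ne.symm hne))
          rw [R.rk_star] at this; omega
        have eb : b = R.star := by
          by_contra hne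
          have := R.rk_strictMono (lt_of_le_of_ne (R.bot_le b) (Ne.symm hne))
          rw [R.rk_star] at this; omega
        rw [ea, eb]
        exact Relation.EqvGen.refl _
      · -- rk x = 2 : star is a common element
        have hras : R.rk a = 1 := by omega
        have hrbs : R.rk b = 1 := by omega
        refine Relation.EqvGen.rel _ _ ⟨ha, hb, R.star, ⟨?_, ?_⟩, ⟨?_, ?_⟩⟩
        · exact RP_star_lt R (by omega)
        · rw [R.rk_star]; omega
        · exact RP_star_lt R (by omega)
        · rw [R.rk_star]; omega
    · -- rk x ≥ 3 : use the graph hypothesis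
      have hcon := h x h3
      have hva : memGbq R x 3 a := ⟨RP_star_lt R (by omega), ha.1, by omega⟩
      have hvb : memGbq R x 3 b := ⟨RP_star_lt R (by omega), hb.1, by omega⟩
      -- map each vertex to a top element
      have hF : ∀ u : {a : Γ // memGbq R x 3 a},
          ∃ a', memS1 R x a' ∧ (u.1 = a' ∨ memS1 R a' u.1) := by
        intro u
        by_cases hs : memS1 R x u.1
        · exact ⟨u.1, hs, Or.inl rfl⟩
        · obtain ⟨hsu, hux, hd⟩ := u.2
          have hru : R.rk u.1 < R.rk x := R.rk_strictMono hux
          obtain ⟨a', ha'S, ha'x⟩ := RP_exists_covby_le R hux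
          have hra' : R.rk u.1 < R.rk a' := R.rk_strictMono ha'S.1
          have hne : a' ≠ x := by rintro rfl; exact hs ⟨hux, ha'S.2⟩
          have hlt : a' < x := lt_of_le_of_ne ha'x hne
          have hra'x : R.rk a' < R.rk x := R.rk_strictMono hlt
          have : R.rk x - R.rk u.1 ≠ 1 := fun hh => hs ⟨hux, hh⟩
          exact ⟨a', ⟨hlt, by omega⟩, Or.inr ha'S⟩
      choose F hF1 hF2 using hF
      -- F of a top vertex is itself
      have Ftop : ∀ (u : {a : Γ // memGbq R x 3 a}), memS1 R x u.1 → F u = u.1 := by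
        intro u hu
        rcases hF2 u with h | h
        · exact h.symm
        · exfalso
          have h1 := R.rk_strictMono h.1
          have h2 := R.rk_strictMono hu.1
          have h3 := R.rk_strictMono (hF1 u).1
          have e1 := hu.2
          have e2 := (hF1 u).2
          have e3 := h.2
          omega
      have adjlem : ∀ u v, (compGraph (memGbq R x 3)).Adj u v →
          Relation.EqvGen rel (F u) (F v) := by
        have half : ∀ u v : {a : Γ // memGbq R x 3 a}, u.1 < v.1 →
            Relation.EqvGen rel (F u) (F v) := by
          intro u v hlt
          have hru : R.rk u.1 < R.rk v.1 := R.rk_strictMono hlt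
          have hrvx : R.rk v.1 < R.rk x := R.rk_strictMono v.2.2.1
          have hdu := u.2.2.2
          have hdv := v.2.2.2
          have hrux : R.rk u.1 < R.rk x := R.rk_strictMono u.2.2.1
          -- hence rk v = rk x - 1, rk u = rk x - 2
          have hvtop : memS1 R x v.1 := ⟨v.2.2.1, by
            simp only [show (3:ℕ) - 1 = 2 from rfl] at hdu hdv; omega⟩
          have hFv : F v = v.1 := Ftop v hvtop
          rcases hF2 u with he | he
          · -- u would be top: impossible by rank
            exfalso
            have hq1 : R.rk (F u) < R.rk x := R.rk_strictMono (hF1 u).1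
            have hq2 := (hF1 u).2
            have heq : R.rk u.1 = R.rk (F u) := congrArg R.rk he
            simp only [show (3:ℕ) - 1 = 2 from rfl] at hdu; omega
          · -- rel (F u) v via c = u.1
            rw [hFv]
            have he2 := he.2
            refine Relation.EqvGen.rel _ _ ⟨hF1 u, hvtop, u.1, he,
              ⟨hlt, by simp only [show (3:ℕ) - 1 = 2 from rfl] at hdu; omega⟩⟩
        rintro u v ⟨hne, hlt | hlt⟩
        · exact half u v hlt
        · exact Relation.EqvGen.symm _ _ (half v u hlt)
      have key : ∀ (u v : {a : Γ // memGbq R x 3 a}),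
          (compGraph (memGbq R x 3)).Walk u v → Relation.EqvGen rel (F u) (F v) := by
        intro u v w
        induction w with
        | nil => exact Relation.EqvGen.refl _
        | cons hadj _ ih => exact Relation.EqvGen.trans _ _ _ (adjlem _ _ hadj) ih
      obtain ⟨w⟩ := hcon.preconnected ⟨a, hva⟩ ⟨b, hvb⟩
      have := key _ _ w
      rwa [Ftop ⟨a, hva⟩ ha, Ftop ⟨b, hvb⟩ hb] at this
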